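/- With the assumptions of the twisting setup (F an invertible twisting element of a quasitriangular Hopf algebra satisfying the hexagon-type conditions (Δ⊗id)(F) = F₁₃F₂₃ and (id⊗Δ)(F) = F₁₃F₁₂ and the cocycle condition F₁₂(Δ⊗id)(F) = F₂₃(id⊗Δ)(F)), the element φ := α S(β) (where F = α⊗β) is invertible with φ^{-1} = S(γ)δ (where F^{-1} = γ⊗δ), and its coproduct is Δ(φ) = F₁₂^{-1} F₂₁^{-1} · (φ ⊗ φ). -/

import Mathlib

open TensorProduct

noncomputable section

variable (A : Type) [Ring A] [HopfAlgebra ℂ A]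

/-- The inclusion `A ⊗ A → A ⊗ A ⊗ A` on legs 1,2: `x ⊗ y ↦ x ⊗ y ⊗ 1`. -/
def ins12 : A ⊗[ℂ] A →ₗ[ℂ] A ⊗[ℂ] (A ⊗[ℂ] A) :=
  TensorProduct.map LinearMap.id ((TensorProduct.mk ℂ A A).flip 1)

/-- The inclusion on legs 2,3: `x ⊗ y ↦ 1 ⊗ x ⊗ y`. -/
def ins23 : A ⊗[ℂ] A →ₗ[ℂ] A ⊗[ℂ] (A ⊗[ℂ] A) :=
  TensorProduct.mk ℂ A (A ⊗[ℂ] A) 1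

/-- The inclusion on legs 1,3: `x ⊗ y ↦ x ⊗ 1 ⊗ y`. -/
def ins13 : A ⊗[ℂ] A →ₗ[ℂ] A ⊗[ℂ] (A ⊗[ℂ] A) :=
  TensorProduct.map LinearMap.id (TensorProduct.mk ℂ A A 1)

/-- `Δ ⊗ id`, reassociated: `A ⊗ A → A ⊗ (A ⊗ A)`. -/
def comulLeft : A ⊗[ℂ] A →ₗ[ℂ] A ⊗[ℂ] (A ⊗[ℂ] A) :=
  (TensorProduct.assoc ℂ A A A).toLinearMap ∘ₗ
    LinearMap.rTensor A (Coalgebra.comul (R := ℂ) (A := A))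

/-- `id ⊗ Δ : A ⊗ A → A ⊗ (A ⊗ A)`. -/
def comulRight : A ⊗[ℂ] A →ₗ[ℂ] A ⊗[ℂ] (A ⊗[ℂ] A) :=
  LinearMap.lTensor A (Coalgebra.comul (R := ℂ) (A := A))

end

open TensorProduct Coalgebra
set_option synthInstance.maxHeartbeats 400000
set_option maxHeartbeats 1600000

noncomputable section Conv

variable {C D : Type} [AddCommGroup C] [Module ℂ C] [Coalgebra ℂ C]
  [Ring D] [Algebra ℂ D]

/-- Convolution product on `Hom(C, D)`. -/
def conv (f g : C →ₗ[ℂ] D) : C →ₗ[ℂ] D :=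
  LinearMap.mul' ℂ D ∘ₗ TensorProduct.map f g ∘ₗ Coalgebra.comul

/-- Convolution unit. -/
def convUnit : C →ₗ[ℂ] D := Algebra.linearMap ℂ D ∘ₗ Coalgebra.counit

lemma conv_apply (f g : C →ₗ[ℂ] D) (c : C) {ι : Type*} (r : Repr ℂ c ι) :
    conv f g c = ∑ i ∈ r.index, f (r.left i) * g (r.right i) := by
  simp only [conv, LinearMap.comp_apply, ← r.eq, map_sum, TensorProduct.map_tmul,
    LinearMap.mul'_apply]

lemma sum_counit_smul_left {c : C} {ι : Type*} (r : Repr ℂ c ι) :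
    ∑ i ∈ r.index, counit (R := ℂ) (r.left i) • r.right i = c := by
  have h := congrArg (TensorProduct.lid ℂ C) (Coalgebra.sum_counit_tmul_eq r)
  simp only [map_sum, TensorProduct.lid_tmul, one_smul] at h
  exact h

lemma sum_counit_smul_right {c : C} {ι : Type*} (r : Repr ℂ c ι) :
    ∑ i ∈ r.index, counit (R := ℂ) (r.right i) • r.left i = c := by
  have h := congrArg (TensorProduct.rid ℂ C) (Coalgebra.sum_tmul_counit_eq r)
  simp only [map_sum, TensorProduct.rid_tmul, one_smul] at h
  exact h

lemma conv_unit_right (f : C →ₗ[ℂ] D) : conv f convUnit = f := by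
  ext c
  have r := Repr.arbitrary ℂ c
  rw [conv_apply _ _ c r]
  have h1 : ∀ i ∈ r.index, f (r.left i) * convUnit (r.right i)
      = f (counit (R := ℂ) (r.right i) • r.left i) := by
    intro i _
    simp [convUnit, Algebra.algebraMap_eq_smul_one, mul_smul_comm]
  rw [Finset.sum_congr rfl h1, ← map_sum, sum_counit_smul_right r]

lemma conv_unit_left (f : C →ₗ[ℂ] D) : conv convUnit f = f := by
  ext c
  have r := Repr.arbitrary ℂ c
  rw [conv_apply _ _ c r]
  have h1 : ∀ i ∈ r.index, convUnit (r.left i) * f (r.right i)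
      = f (counit (R := ℂ) (r.left i) • r.right i) := by
    intro i _
    simp [convUnit, Algebra.algebraMap_eq_smul_one, smul_mul_assoc]
  rw [Finset.sum_congr rfl h1, ← map_sum, sum_counit_smul_left r]

lemma conv_assoc (f g h : C →ₗ[ℂ] D) : conv (conv f g) h = conv f (conv g h) := by
  ext c
  have r := Repr.arbitrary ℂ c
  have rL : ∀ i : C × C, Repr ℂ (r.left i) (C × C) := fun i => Repr.arbitrary ℂ (r.left i)
  have rR : ∀ i : C × C, Repr ℂ (r.right i) (C × C) := fun i => Repr.arbitrary ℂ (r.right i)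
  have key := Coalgebra.sum_map_tmul_tmul_eq (R := ℂ)
    (f := (LinearMap.id : C →ₗ[ℂ] C)) (g := (LinearMap.id : C →ₗ[ℂ] C))
    (h := (LinearMap.id : C →ₗ[ℂ] C)) c (repr := r) (a₁ := rL) (a₂ := rR)
  -- apply the trilinear multiplication map to both sides
  have key2 := congrArg (LinearMap.mul' ℂ D ∘ₗ
    TensorProduct.map f (LinearMap.mul' ℂ D ∘ₗ TensorProduct.map g h)) key
  simp only [map_sum, LinearMap.comp_apply, TensorProduct.map_tmul, LinearMap.mul'_apply,
    LinearMap.id_coe, id_eq] at key2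
  rw [conv_apply _ _ c r, conv_apply _ _ c r]
  have hL : ∀ i ∈ r.index, conv f g (r.left i) * h (r.right i)
      = ∑ j ∈ (rL i).index, f ((rL i).left j) * ((g ((rL i).right j)) * h (r.right i)) := by
    intro i _
    rw [conv_apply _ _ _ (rL i), Finset.sum_mul]
    exact Finset.sum_congr rfl fun j _ => by rw [mul_assoc]
  have hR : ∀ i ∈ r.index, f (r.left i) * conv g h (r.right i)
      = ∑ j ∈ (rR i).index, f (r.left i) * (g ((rR i).left j) * h ((rR i).right j)) := by
    intro i _
    rw [conv_apply _ _ _ (rR i), Finset.mul_sum]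
  rw [Finset.sum_congr rfl hL, Finset.sum_congr rfl hR]
  exact key2.symm

lemma conv_inv_unique {f g h : C →ₗ[ℂ] D} (h1 : conv f g = convUnit)
    (h2 : conv g h = convUnit) : f = h := by
  have : conv f (conv g h) = conv (conv f g) h := (conv_assoc f g h).symm
  rw [h1, h2, conv_unit_right, conv_unit_left] at this
  exact this

end Conv
open TensorProduct Coalgebra
set_option synthInstance.maxHeartbeats 400000
set_option maxHeartbeats 1600000

noncomputable section P2
variable {A : Type} [Ring A] [HopfAlgebra ℂ A]

local notation "S" => HopfAlgebra.antipode (R := ℂ) (A := A)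

/-- A `Repr` for a pure tensor, from `Repr`s of the two factors. -/
def Repr.tmulRepr {x y : A} {ι κ : Type*} (rx : Repr ℂ x ι) (ry : Repr ℂ y κ) :
    Repr ℂ (x ⊗ₜ[ℂ] y) (ι × κ) where
  index := rx.index ×ˢ ry.index
  left := fun p => rx.left p.1 ⊗ₜ[ℂ] ry.left p.2
  right := fun p => rx.right p.1 ⊗ₜ[ℂ] ry.right p.2
  eq := by
    rw [Finset.sum_product]
    show _ = Coalgebra.comul (R := ℂ) (A := A ⊗[ℂ] A) (x ⊗ₜ[ℂ] y)
    rw [TensorProduct.comul_def]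
    simp only [LinearMap.comp_apply, AlgebraTensorModule.map_tmul]
    rw [← rx.eq, ← ry.eq]
    rw [TensorProduct.sum_tmul, map_sum]
    refine Finset.sum_congr rfl fun i _ => ?_
    rw [TensorProduct.tmul_sum, map_sum]
    refine Finset.sum_congr rfl fun j _ => ?_
    exact TensorProduct.tensorTensorTensorComm_tmul ..

/-- A `Repr` for a product, from `Repr`s of the two factors. -/
def Repr.mulRepr {x y : A} {ι κ : Type*} (rx : Repr ℂ x ι) (ry : Repr ℂ y κ) :
    Repr ℂ (x * y) (ι × κ) where
  index := rx.index ×ˢ ry.index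
  left := fun p => rx.left p.1 * ry.left p.2
  right := fun p => rx.right p.1 * ry.right p.2
  eq := by
    rw [Finset.sum_product]
    show _ = Coalgebra.comul (R := ℂ) (x * y)
    rw [Bialgebra.comul_mul, ← rx.eq, ← ry.eq, Finset.sum_mul]
    refine Finset.sum_congr rfl fun i _ => ?_
    rw [Finset.mul_sum]
    refine Finset.sum_congr rfl fun j _ => ?_
    exact (Algebra.TensorProduct.tmul_mul_tmul _ _ _ _).symm

@[simp] lemma antipode_one' : S (1 : A) = 1 := by
  have h := HopfAlgebra.mul_antipode_rTensor_comul_apply (R := ℂ) (a := (1 : A))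
  rw [Bialgebra.comul_one, Bialgebra.counit_one] at h
  rw [Algebra.TensorProduct.one_def] at h
  simpa using h

end P2

noncomputable section P3
variable {A : Type} [Ring A] [HopfAlgebra ℂ A]

local notation "S" => HopfAlgebra.antipode (R := ℂ) (A := A)

lemma counit_tmul' (a b : A) :
    Coalgebra.counit (R := ℂ) (A := A ⊗[ℂ] A) (a ⊗ₜ[ℂ] b)
      = Coalgebra.counit (R := ℂ) a * Coalgebra.counit (R := ℂ) b := by
  rw [TensorProduct.counit_tmul, smul_eq_mul, mul_comm]

lemma antipode_mul_rev (x y : A) : S (x * y) = S y * S x := by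
  have main : ((S : A →ₗ[ℂ] A) ∘ₗ LinearMap.mul' ℂ A)
      = LinearMap.mul' ℂ A ∘ₗ TensorProduct.map S S ∘ₗ (TensorProduct.comm ℂ A A).toLinearMap := by
    apply conv_inv_unique (g := LinearMap.mul' ℂ A)
    · apply TensorProduct.ext'
      intro a b
      have ra := Repr.arbitrary ℂ a
      have rb := Repr.arbitrary ℂ b
      rw [conv_apply _ _ _ (Repr.tmulRepr ra rb)]
      simp only [Repr.tmulRepr, LinearMap.comp_apply, LinearMap.mul'_apply]
      have h2 := HopfAlgebra.sum_antipode_mul_eq_algebraMap_counit (R := ℂ) (Repr.mulRepr ra rb)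
      simp only [Repr.mulRepr] at h2
      rw [h2]
      simp [convUnit, counit_tmul', Bialgebra.counit_mul, mul_comm]
    · apply TensorProduct.ext'
      intro a b
      have ra := Repr.arbitrary ℂ a
      have rb := Repr.arbitrary ℂ b
      rw [conv_apply _ _ _ (Repr.tmulRepr ra rb)]
      simp only [Repr.tmulRepr, LinearMap.comp_apply, LinearMap.mul'_apply,
        LinearEquiv.coe_coe, TensorProduct.comm_tmul, TensorProduct.map_tmul]
      have h1 : ∀ p ∈ ra.index ×ˢ rb.index,
          ra.left p.1 * rb.left p.2 * (S (rb.right p.2) * S (ra.right p.1))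
          = ra.left p.1 * ((rb.left p.2 * S (rb.right p.2)) * S (ra.right p.1)) := by
        intro p _
        rw [mul_assoc, ← mul_assoc (rb.left p.2)]
      rw [Finset.sum_congr rfl h1, Finset.sum_product]
      have h2 : ∀ i ∈ ra.index,
          (∑ j ∈ rb.index, ra.left i * ((rb.left j * S (rb.right j)) * S (ra.right i)))
          = Coalgebra.counit (R := ℂ) b • (ra.left i * S (ra.right i)) := by
        intro i _
        rw [← Finset.mul_sum, ← Finset.sum_mul, HopfAlgebra.sum_mul_antipode_eq_smul (R := ℂ) rb,
          smul_mul_assoc, one_mul, mul_smul_comm]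
      rw [Finset.sum_congr rfl h2, ← Finset.smul_sum,
        HopfAlgebra.sum_mul_antipode_eq_smul (R := ℂ) ra]
      simp only [convUnit, LinearMap.comp_apply, Algebra.linearMap_apply, counit_tmul',
        Algebra.algebraMap_eq_smul_one, smul_smul]
      rw [mul_comm]
  have h := congrArg (fun f : (A ⊗[ℂ] A) →ₗ[ℂ] A => f (x ⊗ₜ[ℂ] y)) main
  simpa using h

/-- `Ψ : x ⊗ (y ⊗ z) ↦ S z ⊗ (x * S y)` -/
def psiMap : A ⊗[ℂ] (A ⊗[ℂ] A) →ₗ[ℂ] A ⊗[ℂ] A :=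
  (TensorProduct.comm ℂ A A).toLinearMap ∘ₗ
    (TensorProduct.map (LinearMap.mul' ℂ A ∘ₗ LinearMap.lTensor A S) S) ∘ₗ
      (TensorProduct.assoc ℂ A A A).symm.toLinearMap

@[simp] lemma psiMap_tmul (x y z : A) :
    psiMap (x ⊗ₜ[ℂ] (y ⊗ₜ[ℂ] z)) = S z ⊗ₜ[ℂ] (x * S y) := by
  simp [psiMap]

/-- key inner collapse lemma -/
lemma inner_collapse (y : A) {ι : Type*} (r : Repr ℂ y ι) :
    ∑ i ∈ r.index, (1 ⊗ₜ[ℂ] r.left i) *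
        (TensorProduct.map S S ((TensorProduct.comm ℂ A A) (Coalgebra.comul (r.right i))))
      = S y ⊗ₜ[ℂ] 1 := by
  have rl : ∀ i : ι, Repr ℂ (r.left i) (A × A) := fun i => Repr.arbitrary ℂ (r.left i)
  have rr : ∀ i : ι, Repr ℂ (r.right i) (A × A) := fun i => Repr.arbitrary ℂ (r.right i)
  have hterm : ∀ i ∈ r.index,
      (1 ⊗ₜ[ℂ] r.left i) *
          (TensorProduct.map S S ((TensorProduct.comm ℂ A A) (Coalgebra.comul (r.right i))))
        = ∑ j ∈ (rr i).index, S ((rr i).right j) ⊗ₜ[ℂ] (r.left i * S ((rr i).left j)) := by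
    intro i _
    rw [← (rr i).eq, map_sum, map_sum, Finset.mul_sum]
    refine Finset.sum_congr rfl fun j _ => ?_
    rw [TensorProduct.comm_tmul, TensorProduct.map_tmul, Algebra.TensorProduct.tmul_mul_tmul,
      one_mul]
  rw [Finset.sum_congr rfl hterm]
  have key := Coalgebra.sum_map_tmul_tmul_eq (R := ℂ)
    (f := (LinearMap.id : A →ₗ[ℂ] A)) (g := (LinearMap.id : A →ₗ[ℂ] A))
    (h := (LinearMap.id : A →ₗ[ℂ] A)) y (repr := r) (a₁ := rl) (a₂ := rr)
  have key2 := congrArg psiMap key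
  simp only [map_sum, LinearMap.id_coe, id_eq, psiMap_tmul] at key2
  rw [key2]
  have hcol : ∀ i ∈ r.index,
      (∑ j ∈ (rl i).index, S (r.right i) ⊗ₜ[ℂ] ((rl i).left j * S ((rl i).right j)))
        = Coalgebra.counit (R := ℂ) (r.left i) • (S (r.right i) ⊗ₜ[ℂ] (1:A)) := by
    intro i _
    rw [← TensorProduct.tmul_sum, HopfAlgebra.sum_mul_antipode_eq_smul (R := ℂ) (rl i),
      TensorProduct.tmul_smul]
  rw [Finset.sum_congr rfl hcol]
  have : ∑ i ∈ r.index, Coalgebra.counit (R := ℂ) (r.left i) • (S (r.right i) ⊗ₜ[ℂ] (1:A))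
      = (∑ i ∈ r.index, Coalgebra.counit (R := ℂ) (r.left i) • S (r.right i)) ⊗ₜ[ℂ] (1:A) := by
    rw [TensorProduct.sum_tmul]
    exact Finset.sum_congr rfl fun i _ => by rw [TensorProduct.smul_tmul']
  rw [this]
  congr 1
  have : ∑ i ∈ r.index, Coalgebra.counit (R := ℂ) (r.left i) • S (r.right i)
      = S (∑ i ∈ r.index, Coalgebra.counit (R := ℂ) (r.left i) • r.right i) := by
    rw [map_sum]
    exact Finset.sum_congr rfl fun i _ => (map_smul _ _ _).symm
  rw [this, sum_counit_smul_left r]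

end P3

noncomputable section P4
variable {A : Type} [Ring A] [HopfAlgebra ℂ A]

local notation "S" => HopfAlgebra.antipode (R := ℂ) (A := A)

/-- `Ξ : U ⊗ z ↦ U * ((S⊗S)(τ(Δ z)))` on `(A⊗A)⊗A`. -/
def xiMap : (A ⊗[ℂ] A) ⊗[ℂ] A →ₗ[ℂ] A ⊗[ℂ] A :=
  LinearMap.mul' ℂ (A ⊗[ℂ] A) ∘ₗ
    LinearMap.lTensor (A ⊗[ℂ] A)
      ((TensorProduct.map S S ∘ₗ (TensorProduct.comm ℂ A A).toLinearMap) ∘ₗ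
        Coalgebra.comul (R := ℂ))

@[simp] lemma xiMap_tmul (U : A ⊗[ℂ] A) (z : A) :
    xiMap (U ⊗ₜ[ℂ] z)
      = U * (TensorProduct.map S S ((TensorProduct.comm ℂ A A) (Coalgebra.comul (R := ℂ) z))) := by
  simp [xiMap]

lemma comul_antipode (a : A) :
    Coalgebra.comul (R := ℂ) (S a)
      = TensorProduct.map S S ((TensorProduct.comm ℂ A A) (Coalgebra.comul (R := ℂ) a)) := by
  have main : ((Coalgebra.comul (R := ℂ) (A := A)) ∘ₗ (S : A →ₗ[ℂ] A))
      = (TensorProduct.map S S ∘ₗ (TensorProduct.comm ℂ A A).toLinearMap) ∘ₗ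
          Coalgebra.comul (R := ℂ) := by
    apply conv_inv_unique (g := (Coalgebra.comul (R := ℂ) (A := A)))
    · -- conv (Δ ∘ S) Δ = unit
      ext a
      have r := Repr.arbitrary ℂ a
      rw [conv_apply _ _ _ r]
      have h1 : ∀ i ∈ r.index,
          ((Coalgebra.comul (R := ℂ) (A := A)) ∘ₗ (S : A →ₗ[ℂ] A)) (r.left i) *
              Coalgebra.comul (r.right i)
            = Coalgebra.comul (R := ℂ) (S (r.left i) * r.right i) := by
        intro i _
        rw [Bialgebra.comul_mul]; rfl
      rw [Finset.sum_congr rfl h1, ← map_sum, HopfAlgebra.sum_antipode_mul_eq_algebraMap_counit (R := ℂ) r]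
      simp [convUnit, Algebra.algebraMap_eq_smul_one]
    · -- conv Δ ((S⊗S) ∘ τ ∘ Δ) = unit
      ext a
      have r := Repr.arbitrary ℂ a
      rw [conv_apply _ _ _ r]
      have rr : ∀ i : A × A, Repr ℂ (r.right i) (A × A) := fun i => Repr.arbitrary ℂ (r.right i)
      -- rewrite each summand as Ξ applied to (Δ lᵢ) ⊗ rᵢ
      have h1 : ∀ i ∈ r.index,
          Coalgebra.comul (R := ℂ) (r.left i) *
              ((TensorProduct.map S S ∘ₗ (TensorProduct.comm ℂ A A).toLinearMap) ∘ₗ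
                Coalgebra.comul (R := ℂ)) (r.right i)
            = xiMap ((LinearMap.rTensor A (Coalgebra.comul (R := ℂ)))
                (r.left i ⊗ₜ[ℂ] r.right i)) := by
        intro i _
        simp [xiMap]
      rw [Finset.sum_congr rfl h1, ← map_sum, ← map_sum]
      rw [r.eq]
      -- coassociativity
      have hco : (LinearMap.rTensor A (Coalgebra.comul (R := ℂ))) (Coalgebra.comul a)
          = (TensorProduct.assoc ℂ A A A).symm
              ((LinearMap.lTensor A (Coalgebra.comul (R := ℂ))) (Coalgebra.comul a)) :=
        (Coalgebra.coassoc_symm_apply a).symm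
      rw [hco, ← r.eq]
      simp only [map_sum, LinearMap.lTensor_tmul]
      have h2 : ∀ i ∈ r.index,
          xiMap ((TensorProduct.assoc ℂ A A A).symm
              (r.left i ⊗ₜ[ℂ] Coalgebra.comul (R := ℂ) (r.right i)))
            = (r.left i * S (r.right i)) ⊗ₜ[ℂ] (1 : A) := by
        intro i _
        rw [← (rr i).eq, TensorProduct.tmul_sum, map_sum, map_sum]
        have h3 : ∀ j ∈ (rr i).index,
            xiMap ((TensorProduct.assoc ℂ A A A).symm
                (r.left i ⊗ₜ[ℂ] ((rr i).left j ⊗ₜ[ℂ] (rr i).right j)))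
              = (r.left i ⊗ₜ[ℂ] (1:A)) * ((1 ⊗ₜ[ℂ] (rr i).left j) *
                  (TensorProduct.map S S ((TensorProduct.comm ℂ A A)
                    (Coalgebra.comul (R := ℂ) ((rr i).right j))))) := by
          intro j _
          rw [TensorProduct.assoc_symm_tmul, xiMap_tmul, ← mul_assoc,
            Algebra.TensorProduct.tmul_mul_tmul, mul_one, one_mul]
        rw [Finset.sum_congr rfl h3, ← Finset.mul_sum, inner_collapse (r.right i) (rr i),
          Algebra.TensorProduct.tmul_mul_tmul, mul_one]
      rw [Finset.sum_congr rfl h2]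
      have h4 : ∑ i ∈ r.index, (r.left i * S (r.right i)) ⊗ₜ[ℂ] (1:A)
          = (∑ i ∈ r.index, r.left i * S (r.right i)) ⊗ₜ[ℂ] (1:A) := by
        rw [TensorProduct.sum_tmul]
      rw [h4, HopfAlgebra.sum_mul_antipode_eq_smul (R := ℂ) r]
      simp only [convUnit, LinearMap.comp_apply, Algebra.linearMap_apply,
        Algebra.algebraMap_eq_smul_one, Algebra.TensorProduct.one_def,
        TensorProduct.smul_tmul']
  exact congr($(main) a)

end P4


open TensorProduct

noncomputable section

variable (A : Type) [Ring A] [HopfAlgebra ℂ A]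

variable {A}

section Main


local notation "S" => HopfAlgebra.antipode (R := ℂ) (A := A)
local notation "Δ" => Coalgebra.comul (R := ℂ) (A := A)

/-- `a ↦ a ⊗ 1` -/
abbrev lmap : A →ₗ[ℂ] A ⊗[ℂ] A := (TensorProduct.mk ℂ A A).flip 1
/-- `a ↦ 1 ⊗ a` -/
abbrev rmap : A →ₗ[ℂ] A ⊗[ℂ] A := TensorProduct.mk ℂ A A 1

@[simp] lemma lmap_apply (a : A) : (lmap : A →ₗ[ℂ] A ⊗[ℂ] A) a = a ⊗ₜ[ℂ] (1:A) := rfl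
@[simp] lemma rmap_apply (a : A) : (rmap : A →ₗ[ℂ] A ⊗[ℂ] A) a = (1:A) ⊗ₜ[ℂ] a := rfl

/-- `x ⊗ y ↦ x * S y` -/
def phiOf (X : A ⊗[ℂ] A) : A := LinearMap.mul' ℂ A (TensorProduct.map LinearMap.id S X)
/-- `x ⊗ y ↦ S x * y` -/
def psiOf (X : A ⊗[ℂ] A) : A := LinearMap.mul' ℂ A (TensorProduct.map S LinearMap.id X)

@[simp] lemma phiOf_tmul (x y : A) : phiOf (x ⊗ₜ[ℂ] y) = x * S y := by simp [phiOf]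
@[simp] lemma phiOf_zero : phiOf (0 : A ⊗[ℂ] A) = 0 := by simp [phiOf]
@[simp] lemma phiOf_add (X Y : A ⊗[ℂ] A) : phiOf (X + Y) = phiOf X + phiOf Y := by
  simp [phiOf]
@[simp] lemma psiOf_tmul (x y : A) : psiOf (x ⊗ₜ[ℂ] y) = S x * y := by simp [psiOf]
@[simp] lemma psiOf_zero : psiOf (0 : A ⊗[ℂ] A) = 0 := by simp [psiOf]
@[simp] lemma psiOf_add (X Y : A ⊗[ℂ] A) : psiOf (X + Y) = psiOf X + psiOf Y := by
  simp [psiOf]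

/-- `x ⊗ y ↦ ε x • y` -/
def epsL : A ⊗[ℂ] A →ₗ[ℂ] A :=
  (TensorProduct.lid ℂ A).toLinearMap ∘ₗ LinearMap.rTensor A (Coalgebra.counit (R := ℂ))

/-- `x ⊗ y ↦ ε y • x` -/
def epsR : A ⊗[ℂ] A →ₗ[ℂ] A :=
  (TensorProduct.rid ℂ A).toLinearMap ∘ₗ LinearMap.lTensor A (Coalgebra.counit (R := ℂ))

@[simp] lemma epsL_tmul (x y : A) : epsL (x ⊗ₜ[ℂ] y) = Coalgebra.counit (R := ℂ) x • y := by
  simp [epsL]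

@[simp] lemma epsR_tmul (x y : A) : epsR (x ⊗ₜ[ℂ] y) = Coalgebra.counit (R := ℂ) y • x := by
  simp [epsR]

@[simp] lemma comulLeft_tmul (x y : A) :
    comulLeft A (x ⊗ₜ[ℂ] y) = (TensorProduct.assoc ℂ A A A) ((Δ x) ⊗ₜ[ℂ] y) := by
  simp [comulLeft]

@[simp] lemma comulRight_tmul (x y : A) :
    comulRight A (x ⊗ₜ[ℂ] y) = x ⊗ₜ[ℂ] (Δ y) := by
  simp [comulRight]

@[simp] lemma ins12_tmul (x y : A) :
    ins12 A (x ⊗ₜ[ℂ] y) = x ⊗ₜ[ℂ] (y ⊗ₜ[ℂ] (1:A)) := by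
  simp [ins12]

@[simp] lemma ins13_tmul (x y : A) :
    ins13 A (x ⊗ₜ[ℂ] y) = x ⊗ₜ[ℂ] ((1:A) ⊗ₜ[ℂ] y) := by
  simp [ins13]

lemma ins23_apply (X : A ⊗[ℂ] A) : ins23 A X = (1:A) ⊗ₜ[ℂ] X := rfl

/-- ε applied on leg 1 of `A ⊗ (A ⊗ A)`, as an algebra hom. -/
def Eps1 : A ⊗[ℂ] (A ⊗[ℂ] A) →ₐ[ℂ] A ⊗[ℂ] A :=
  (Algebra.TensorProduct.lid ℂ (A ⊗[ℂ] A)).toAlgHom.comp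
    (Algebra.TensorProduct.map (Bialgebra.counitAlgHom ℂ A) (AlgHom.id ℂ (A ⊗[ℂ] A)))

@[simp] lemma Eps1_tmul (x : A) (Y : A ⊗[ℂ] A) :
    Eps1 (x ⊗ₜ[ℂ] Y) = Coalgebra.counit (R := ℂ) x • Y := by
  simp [Eps1]

/-- ε applied on leg 1 of `A ⊗ A`, as an algebra hom. -/
def EpsB : A ⊗[ℂ] A →ₐ[ℂ] A :=
  (Algebra.TensorProduct.lid ℂ A).toAlgHom.comp
    (Algebra.TensorProduct.map (Bialgebra.counitAlgHom ℂ A) (AlgHom.id ℂ A))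

@[simp] lemma EpsB_tmul (x y : A) :
    EpsB (x ⊗ₜ[ℂ] y) = Coalgebra.counit (R := ℂ) x • y := by
  simp [EpsB]

/-- ε applied on leg 2 of `A ⊗ (A ⊗ A)`, as an algebra hom. -/
def Eps2 : A ⊗[ℂ] (A ⊗[ℂ] A) →ₐ[ℂ] A ⊗[ℂ] A :=
  Algebra.TensorProduct.map (AlgHom.id ℂ A) EpsB

@[simp] lemma Eps2_tmul (x : A) (Y : A ⊗[ℂ] A) :
    Eps2 (x ⊗ₜ[ℂ] Y) = x ⊗ₜ[ℂ] (EpsB Y) := by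
  simp [Eps2]

lemma Eps1_comulLeft (X : A ⊗[ℂ] A) : Eps1 (comulLeft A X) = X := by
  induction X using TensorProduct.induction_on with
  | zero => simp
  | add u v hu hv => rw [map_add, map_add, hu, hv]
  | tmul x y =>
    rw [comulLeft_tmul]
    have r := Repr.arbitrary ℂ x
    rw [← r.eq]
    rw [TensorProduct.sum_tmul, map_sum, map_sum]
    have : ∀ i ∈ r.index,
        Eps1 ((TensorProduct.assoc ℂ A A A) ((r.left i ⊗ₜ[ℂ] r.right i) ⊗ₜ[ℂ] y))
          = Coalgebra.counit (R := ℂ) (r.left i) • (r.right i ⊗ₜ[ℂ] y) := by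
      intro i _
      rw [TensorProduct.assoc_tmul, Eps1_tmul]
    rw [Finset.sum_congr rfl this]
    have : ∀ i ∈ r.index,
        Coalgebra.counit (R := ℂ) (r.left i) • (r.right i ⊗ₜ[ℂ] y)
          = (Coalgebra.counit (R := ℂ) (r.left i) • r.right i) ⊗ₜ[ℂ] y := by
      intro i _
      rw [TensorProduct.smul_tmul']
    rw [Finset.sum_congr rfl this, ← TensorProduct.sum_tmul, sum_counit_smul_left r]

lemma Eps1_ins13 (X : A ⊗[ℂ] A) : Eps1 (ins13 A X) = (1:A) ⊗ₜ[ℂ] epsL X := by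
  induction X using TensorProduct.induction_on with
  | zero => simp [TensorProduct.tmul_zero]
  | add u v hu hv => rw [map_add, map_add, hu, hv, ← TensorProduct.tmul_add, ← map_add]
  | tmul x y => rw [ins13_tmul, Eps1_tmul, epsL_tmul, TensorProduct.tmul_smul]

lemma Eps1_ins23 (X : A ⊗[ℂ] A) : Eps1 (ins23 A X) = X := by
  rw [ins23_apply, Eps1_tmul, Bialgebra.counit_one, one_smul]

lemma Eps2_comulRight (X : A ⊗[ℂ] A) : Eps2 (comulRight A X) = X := by
  induction X using TensorProduct.induction_on with
  | zero => simp
  | add u v hu hv => rw [map_add, map_add, hu, hv]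
  | tmul x y =>
    rw [comulRight_tmul, Eps2_tmul]
    have r := Repr.arbitrary ℂ y
    rw [← r.eq, map_sum]
    have : ∀ i ∈ r.index,
        EpsB (r.left i ⊗ₜ[ℂ] r.right i) = Coalgebra.counit (R := ℂ) (r.left i) • r.right i :=
      fun i _ => EpsB_tmul _ _
    rw [Finset.sum_congr rfl this, sum_counit_smul_left r]

lemma Eps2_ins13 (X : A ⊗[ℂ] A) : Eps2 (ins13 A X) = X := by
  induction X using TensorProduct.induction_on with
  | zero => simp
  | add u v hu hv => rw [map_add, map_add, hu, hv]
  | tmul x y => rw [ins13_tmul, Eps2_tmul, EpsB_tmul, Bialgebra.counit_one, one_smul]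

lemma Eps2_ins12 (X : A ⊗[ℂ] A) : Eps2 (ins12 A X) = (epsR X) ⊗ₜ[ℂ] (1:A) := by
  induction X using TensorProduct.induction_on with
  | zero => simp
  | add u v hu hv => rw [map_add, map_add, hu, hv, epsR.map_add, TensorProduct.add_tmul]
  | tmul x y =>
    rw [ins12_tmul, Eps2_tmul, EpsB_tmul, epsR_tmul, TensorProduct.tmul_smul,
      TensorProduct.smul_tmul']

end Main

section Main2


local notation "S" => HopfAlgebra.antipode (R := ℂ) (A := A)
local notation "Δ" => Coalgebra.comul (R := ℂ) (A := A)

lemma ins23_mul (X Y : A ⊗[ℂ] A) : ins23 A X * ins23 A Y = ins23 A (X * Y) := by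
  rw [ins23_apply, ins23_apply, ins23_apply, Algebra.TensorProduct.tmul_mul_tmul, one_mul]

lemma ins23_one : ins23 A (1 : A ⊗[ℂ] A) = 1 := by
  rw [ins23_apply]; exact (Algebra.TensorProduct.one_def).symm

lemma ins12_mul (X Y : A ⊗[ℂ] A) : ins12 A X * ins12 A Y = ins12 A (X * Y) := by
  induction X using TensorProduct.induction_on with
  | zero => simp
  | add u v hu hv => rw [map_add, add_mul, hu, hv, ← map_add, ← add_mul]
  | tmul x y =>
    induction Y using TensorProduct.induction_on with
    | zero => simp
    | add u v hu hv => rw [map_add, mul_add, hu, hv, ← map_add, ← mul_add]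
    | tmul z w =>
      rw [ins12_tmul, ins12_tmul, Algebra.TensorProduct.tmul_mul_tmul,
        Algebra.TensorProduct.tmul_mul_tmul, one_mul, Algebra.TensorProduct.tmul_mul_tmul,
        ins12_tmul]

lemma ins12_one : ins12 A (1 : A ⊗[ℂ] A) = 1 := by
  rw [Algebra.TensorProduct.one_def, ins12_tmul]
  simp only [← Algebra.TensorProduct.one_def]

section WithF
variable {Fm Finv : A ⊗[ℂ] A}

lemma epsL_F (hF1 : Fm * Finv = 1) (hFhex1 : comulLeft A Fm = ins13 A Fm * ins23 A Fm) :
    epsL Fm = 1 := by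
  have h := congrArg Eps1 hFhex1
  rw [map_mul, Eps1_comulLeft, Eps1_ins13, Eps1_ins23] at h
  have h2 := congrArg (fun Z => Z * Finv) h
  rw [mul_assoc, hF1, mul_one] at h2
  have h3 := congrArg epsL h2
  rw [epsL_tmul, Bialgebra.counit_one, one_smul] at h3
  rw [← h3, Algebra.TensorProduct.one_def, epsL_tmul, Bialgebra.counit_one, one_smul]

lemma epsR_F (hF2 : Finv * Fm = 1) (hFhex2 : comulRight A Fm = ins13 A Fm * ins12 A Fm) :
    epsR Fm = 1 := by
  have h := congrArg Eps2 hFhex2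
  rw [map_mul, Eps2_comulRight, Eps2_ins13, Eps2_ins12] at h
  have h2 := congrArg (fun Z => Finv * Z) h
  rw [← mul_assoc, hF2, one_mul] at h2
  have h3 := congrArg epsR h2
  rw [epsR_tmul, Bialgebra.counit_one, one_smul] at h3
  rw [← h3, Algebra.TensorProduct.one_def, epsR_tmul, Bialgebra.counit_one, one_smul]

end WithF

/-- `X ↦ Σ x * S y` -/
abbrev gMap : A ⊗[ℂ] A →ₗ[ℂ] A := LinearMap.mul' ℂ A ∘ₗ LinearMap.lTensor A S
/-- `X ↦ Σ S x * y` -/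
abbrev gMap' : A ⊗[ℂ] A →ₗ[ℂ] A := LinearMap.mul' ℂ A ∘ₗ LinearMap.rTensor A S

@[simp] lemma gMap_tmul (x y : A) : gMap (x ⊗ₜ[ℂ] y) = x * S y := by simp
@[simp] lemma gMap'_tmul (x y : A) : gMap' (x ⊗ₜ[ℂ] y) = S x * y := by simp

lemma gMap_comul (y : A) : gMap (Δ y) = Coalgebra.counit (R := ℂ) y • 1 := by
  have := HopfAlgebra.mul_antipode_lTensor_comul_apply (R := ℂ) (a := y)
  rw [Algebra.algebraMap_eq_smul_one] at this
  exact this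

lemma gMap'_comul (y : A) : gMap' (Δ y) = Coalgebra.counit (R := ℂ) y • 1 := by
  have := HopfAlgebra.mul_antipode_rTensor_comul_apply (R := ℂ) (a := y)
  rw [Algebra.algebraMap_eq_smul_one] at this
  exact this

lemma aux_g_mul (u b : A) (Q : A ⊗[ℂ] A) :
    gMap ((u ⊗ₜ[ℂ] b) * Q) = u * gMap Q * S b := by
  induction Q using TensorProduct.induction_on with
  | zero => simp
  | add q₁ q₂ h1 h2 => rw [mul_add, map_add, h1, h2, map_add, mul_add, add_mul]
  | tmul p q =>
    rw [Algebra.TensorProduct.tmul_mul_tmul, gMap_tmul, gMap_tmul, antipode_mul_rev]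
    rw [mul_assoc, mul_assoc, mul_assoc]

lemma aux_g'_sandwich (u v : A) (Z : A ⊗[ℂ] A) :
    gMap' (Z * (u ⊗ₜ[ℂ] v)) = S u * (psiOf Z * v) := by
  induction Z using TensorProduct.induction_on with
  | zero => simp
  | add q₁ q₂ h1 h2 =>
    rw [add_mul, map_add, h1, h2, psiOf_add, add_mul, mul_add]
  | tmul c d =>
    rw [Algebra.TensorProduct.tmul_mul_tmul, gMap'_tmul, antipode_mul_rev, psiOf_tmul,
      mul_assoc, mul_assoc]

lemma aux_g_prod_comul (y : A) (X : A ⊗[ℂ] A) :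
    gMap (X * (Δ y)) = Coalgebra.counit (R := ℂ) y • phiOf X := by
  induction X using TensorProduct.induction_on with
  | zero => simp
  | add q₁ q₂ h1 h2 =>
    rw [add_mul, map_add, h1, h2, phiOf_add, smul_add]
  | tmul a b =>
    rw [aux_g_mul, gMap_comul, phiOf_tmul, mul_smul_comm, mul_one, smul_mul_assoc]

end Main2

section Main3


local notation "S" => HopfAlgebra.antipode (R := ℂ) (A := A)
local notation "Δ" => Coalgebra.comul (R := ℂ) (A := A)

/-- `x ⊗ (y ⊗ z) ↦ x * (S y * z)` -/
def T1 : A ⊗[ℂ] (A ⊗[ℂ] A) →ₗ[ℂ] A := LinearMap.mul' ℂ A ∘ₗ LinearMap.lTensor A gMap'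

@[simp] lemma T1_tmul (x : A) (Q : A ⊗[ℂ] A) : T1 (x ⊗ₜ[ℂ] Q) = x * gMap' Q := by
  simp [T1]

/-- `x ⊗ (y ⊗ z) ↦ S x * (y * S z)` -/
def T2 : A ⊗[ℂ] (A ⊗[ℂ] A) →ₗ[ℂ] A :=
  LinearMap.mul' ℂ A ∘ₗ TensorProduct.map S gMap

@[simp] lemma T2_tmul (x : A) (Q : A ⊗[ℂ] A) : T2 (x ⊗ₜ[ℂ] Q) = S x * gMap Q := by
  simp [T2]

lemma T1_comulRight (X : A ⊗[ℂ] A) : T1 (comulRight A X) = epsR X := by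
  induction X using TensorProduct.induction_on with
  | zero => simp
  | add u v hu hv => rw [map_add, map_add, hu, hv, map_add]
  | tmul x y =>
    rw [comulRight_tmul, T1_tmul, gMap'_comul, epsR_tmul, mul_smul_comm, mul_one]

lemma T2_comulLeft (X : A ⊗[ℂ] A) : T2 (comulLeft A X) = S (epsL X) := by
  induction X using TensorProduct.induction_on with
  | zero => simp
  | add u v hu hv => rw [map_add, map_add, hu, hv, map_add, map_add]
  | tmul x y =>
    rw [comulLeft_tmul]
    have r := Repr.arbitrary ℂ x
    rw [← r.eq, TensorProduct.sum_tmul, map_sum, map_sum]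
    have h1 : ∀ i ∈ r.index,
        T2 ((TensorProduct.assoc ℂ A A A) ((r.left i ⊗ₜ[ℂ] r.right i) ⊗ₜ[ℂ] y))
          = (S (r.left i) * r.right i) * S y := by
      intro i _
      rw [TensorProduct.assoc_tmul, T2_tmul, gMap_tmul, ← mul_assoc]
    rw [Finset.sum_congr rfl h1, ← Finset.sum_mul, HopfAlgebra.sum_antipode_mul_eq_smul (R := ℂ) r,
      epsL_tmul, map_smul, smul_mul_assoc, one_mul]

lemma AUX1 (a b y : A) (Z Q : A ⊗[ℂ] A) :
    T1 ((a ⊗ₜ[ℂ] (Z * (b ⊗ₜ[ℂ] (1:A)))) * ((TensorProduct.assoc ℂ A A A) (Q ⊗ₜ[ℂ] y)))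
      = a * gMap Q * (S b * (psiOf Z * y)) := by
  induction Q using TensorProduct.induction_on with
  | zero => simp
  | add q₁ q₂ h1 h2 =>
    rw [TensorProduct.add_tmul, map_add, mul_add, map_add, h1, h2, map_add, mul_add, add_mul]
  | tmul p q =>
    rw [TensorProduct.assoc_tmul, Algebra.TensorProduct.tmul_mul_tmul, T1_tmul, gMap_tmul]
    rw [mul_assoc (Z) _ _, Algebra.TensorProduct.tmul_mul_tmul, one_mul]
    rw [aux_g'_sandwich, antipode_mul_rev]
    simp only [mul_assoc]

lemma TRI1 (Z X W : A ⊗[ℂ] A) :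
    T1 (ins23 A Z * (ins12 A X * comulLeft A W)) = phiOf X * (psiOf Z * epsL W) := by
  induction X using TensorProduct.induction_on with
  | zero => simp
  | add u v hu hv =>
    rw [map_add, add_mul, mul_add, map_add, hu, hv, phiOf_add, add_mul]
  | tmul a b =>
    induction W using TensorProduct.induction_on with
    | zero => simp
    | add u v hu hv =>
      rw [map_add, mul_add, mul_add, map_add, hu, hv, map_add, mul_add, mul_add]
    | tmul x y =>
      rw [← mul_assoc, ins23_apply, ins12_tmul, Algebra.TensorProduct.tmul_mul_tmul, one_mul,
        comulLeft_tmul, AUX1, gMap_comul, phiOf_tmul, epsL_tmul]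
      simp only [Algebra.mul_smul_comm, Algebra.smul_mul_assoc, mul_one, mul_assoc]

lemma AUX2 (d : A) (M : A ⊗[ℂ] A) : gMap ((d ⊗ₜ[ℂ] (1:A)) * M) = d * gMap M := by
  rw [aux_g_mul, antipode_one', mul_one]

lemma TRI2 (Z X W : A ⊗[ℂ] A) :
    T2 (ins12 A Z * (ins23 A X * comulRight A W)) = S (epsR W) * (psiOf Z * phiOf X) := by
  induction Z using TensorProduct.induction_on with
  | zero => simp
  | add u v hu hv =>
    rw [map_add, add_mul, map_add, hu, hv, psiOf_add, add_mul, mul_add]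
  | tmul c d =>
    induction W using TensorProduct.induction_on with
    | zero => simp
    | add u v hu hv =>
      rw [map_add, mul_add, mul_add, map_add, hu, hv, map_add, map_add, add_mul]
    | tmul x y =>
      rw [ins23_apply, comulRight_tmul, Algebra.TensorProduct.tmul_mul_tmul, one_mul,
        ins12_tmul, Algebra.TensorProduct.tmul_mul_tmul, T2_tmul, antipode_mul_rev,
        AUX2, aux_g_prod_comul, psiOf_tmul, epsR_tmul, map_smul]
      simp only [Algebra.mul_smul_comm, Algebra.smul_mul_assoc, mul_assoc]

end Main3

section Main4

variable {Fm Finv : A ⊗[ℂ] A}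

lemma cocycle_re1 (hF2 : Finv * Fm = 1)
    (hFcoc : ins12 A Fm * comulLeft A Fm = ins23 A Fm * comulRight A Fm) :
    ins23 A Finv * (ins12 A Fm * comulLeft A Fm) = comulRight A Fm := by
  rw [hFcoc, ← mul_assoc, ins23_mul, hF2, ins23_one, one_mul]

lemma cocycle_re2 (hF2 : Finv * Fm = 1)
    (hFcoc : ins12 A Fm * comulLeft A Fm = ins23 A Fm * comulRight A Fm) :
    ins12 A Finv * (ins23 A Fm * comulRight A Fm) = comulLeft A Fm := by
  rw [← hFcoc, ← mul_assoc, ins12_mul, hF2, ins12_one, one_mul]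

lemma inv_phi_psi (hF1 : Fm * Finv = 1) (hF2 : Finv * Fm = 1)
    (hFcoc : ins12 A Fm * comulLeft A Fm = ins23 A Fm * comulRight A Fm)
    (hFhex1 : comulLeft A Fm = ins13 A Fm * ins23 A Fm)
    (hFhex2 : comulRight A Fm = ins13 A Fm * ins12 A Fm) :
    phiOf Fm * psiOf Finv = 1 := by
  have h := congrArg T1 (cocycle_re1 hF2 hFcoc)
  rw [TRI1, T1_comulRight, epsR_F hF2 hFhex2, epsL_F hF1 hFhex1, mul_one] at h
  exact h

lemma inv_psi_phi (hF1 : Fm * Finv = 1) (hF2 : Finv * Fm = 1)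
    (hFcoc : ins12 A Fm * comulLeft A Fm = ins23 A Fm * comulRight A Fm)
    (hFhex1 : comulLeft A Fm = ins13 A Fm * ins23 A Fm)
    (hFhex2 : comulRight A Fm = ins13 A Fm * ins12 A Fm) :
    psiOf Finv * phiOf Fm = 1 := by
  have h := congrArg T2 (cocycle_re2 hF2 hFcoc)
  rw [TRI2, T2_comulLeft, epsR_F hF2 hFhex2, epsL_F hF1 hFhex1, antipode_one', one_mul] at h
  exact h

end Main4

section Main5


local notation "S" => HopfAlgebra.antipode (R := ℂ) (A := A)
local notation "Δ" => Coalgebra.comul (R := ℂ) (A := A)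
local notation "B" => (A ⊗[ℂ] A)

/-- `z ⊗ w ↦ S w ⊗ S z` -/
def Pm : B →ₗ[ℂ] B := TensorProduct.map S S ∘ₗ (TensorProduct.comm ℂ A A).toLinearMap

@[simp] lemma Pm_tmul (x y : A) : Pm (x ⊗ₜ[ℂ] y) = (S y) ⊗ₜ[ℂ] (S x) := by
  simp [Pm]

lemma Pm_mul (U V : B) : Pm (U * V) = Pm V * Pm U := by
  induction U using TensorProduct.induction_on with
  | zero => simp
  | add u v hu hv => rw [add_mul, map_add, hu, hv, map_add, mul_add]
  | tmul a b =>
    induction V using TensorProduct.induction_on with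
    | zero => simp
    | add u v hu hv => rw [mul_add, map_add, hu, hv, map_add, add_mul]
    | tmul c d =>
      rw [Algebra.TensorProduct.tmul_mul_tmul, Pm_tmul, Pm_tmul, Pm_tmul,
        Algebra.TensorProduct.tmul_mul_tmul, antipode_mul_rev, antipode_mul_rev]

lemma Pm_comul (y : A) : Pm (Δ y) = Δ (S y) := (comul_antipode y).symm

/-- `Δ ∘ S`, written as `Pm ∘ Δ`. -/
def comulS : A →ₗ[ℂ] B := Pm ∘ₗ Coalgebra.comul (R := ℂ)

/-- `U ⊗ V ↦ U * Pm V` -/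
def Mmap : B ⊗[ℂ] B →ₗ[ℂ] B := LinearMap.mul' ℂ B ∘ₗ LinearMap.lTensor B Pm

@[simp] lemma Mmap_tmul (U V : B) : Mmap (U ⊗ₜ[ℂ] V) = U * Pm V := by simp [Mmap]

/-- `U ⊗ V ↦ (U * Z) * V` -/
def SandMul (Z : B) : B ⊗[ℂ] B →ₗ[ℂ] B :=
  LinearMap.mul' ℂ B ∘ₗ LinearMap.rTensor B (LinearMap.mulRight ℂ Z)

@[simp] lemma SandMul_tmul (Z U V : B) : SandMul Z (U ⊗ₜ[ℂ] V) = U * Z * V := by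
  simp [SandMul]

lemma SandMul_mid_add (W₁ W₂ : B) (X : B ⊗[ℂ] B) :
    SandMul (W₁ + W₂) X = SandMul W₁ X + SandMul W₂ X := by
  induction X using TensorProduct.induction_on with
  | zero => simp
  | add u v hu hv => rw [map_add, hu, hv, map_add, map_add]; abel
  | tmul U V => rw [SandMul_tmul, SandMul_tmul, SandMul_tmul, mul_add, add_mul]

abbrev E13 : B →ₗ[ℂ] B ⊗[ℂ] B := TensorProduct.map lmap lmap
abbrev E14 : B →ₗ[ℂ] B ⊗[ℂ] B := TensorProduct.map lmap rmap
abbrev E23 : B →ₗ[ℂ] B ⊗[ℂ] B := TensorProduct.map rmap lmap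
abbrev E24 : B →ₗ[ℂ] B ⊗[ℂ] B := TensorProduct.map rmap rmap

/-- legs (1,2,4) embedding as an algebra hom. -/
def i124 : A ⊗[ℂ] B →ₐ[ℂ] B ⊗[ℂ] B :=
  (Algebra.TensorProduct.map (AlgHom.id ℂ B) Algebra.TensorProduct.includeRight).comp
    (Algebra.TensorProduct.assoc ℂ ℂ ℂ A A A).symm.toAlgHom

/-- legs (1,2,3) embedding. -/
def i123 : A ⊗[ℂ] B →ₐ[ℂ] B ⊗[ℂ] B :=
  (Algebra.TensorProduct.map (AlgHom.id ℂ B)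
      (Algebra.TensorProduct.includeLeft : A →ₐ[ℂ] A ⊗[ℂ] A)).comp
    (Algebra.TensorProduct.assoc ℂ ℂ ℂ A A A).symm.toAlgHom

/-- legs (1,3,4) embedding. -/
def i134 : A ⊗[ℂ] B →ₐ[ℂ] B ⊗[ℂ] B :=
  Algebra.TensorProduct.map (Algebra.TensorProduct.includeLeft : A →ₐ[ℂ] A ⊗[ℂ] A)
    (AlgHom.id ℂ B)

/-- legs (2,3,4) embedding. -/
def i234 : A ⊗[ℂ] B →ₐ[ℂ] B ⊗[ℂ] B :=
  Algebra.TensorProduct.map Algebra.TensorProduct.includeRight (AlgHom.id ℂ B)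

/-- `(x ⊗ y) ⊗ z ↦ (x ⊗ y) ⊗ Δ z` after reassociation. -/
def sigmaMap : A ⊗[ℂ] B →ₐ[ℂ] B ⊗[ℂ] B :=
  (Algebra.TensorProduct.map (AlgHom.id ℂ B) (Bialgebra.comulAlgHom ℂ A)).comp
    (Algebra.TensorProduct.assoc ℂ ℂ ℂ A A A).symm.toAlgHom

@[simp] lemma i124_tmul (x y z : A) :
    i124 (x ⊗ₜ[ℂ] (y ⊗ₜ[ℂ] z)) = (x ⊗ₜ[ℂ] y) ⊗ₜ[ℂ] ((1:A) ⊗ₜ[ℂ] z) := by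
  simp [i124, Algebra.TensorProduct.assoc_symm_tmul]

@[simp] lemma i123_tmul (x y z : A) :
    i123 (x ⊗ₜ[ℂ] (y ⊗ₜ[ℂ] z)) = (x ⊗ₜ[ℂ] y) ⊗ₜ[ℂ] (z ⊗ₜ[ℂ] (1:A)) := by
  simp [i123, Algebra.TensorProduct.assoc_symm_tmul]

@[simp] lemma i134_tmul (x : A) (Y : B) :
    i134 (x ⊗ₜ[ℂ] Y) = (x ⊗ₜ[ℂ] (1:A)) ⊗ₜ[ℂ] Y := by
  simp [i134]

@[simp] lemma i234_tmul (x : A) (Y : B) :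
    i234 (x ⊗ₜ[ℂ] Y) = ((1:A) ⊗ₜ[ℂ] x) ⊗ₜ[ℂ] Y := by
  simp [i234]

@[simp] lemma sigmaMap_tmul (x y z : A) :
    sigmaMap (x ⊗ₜ[ℂ] (y ⊗ₜ[ℂ] z)) = (x ⊗ₜ[ℂ] y) ⊗ₜ[ℂ] (Δ z) := by
  simp [sigmaMap, Algebra.TensorProduct.assoc_symm_tmul]

lemma i124_ins12 (X : B) : i124 (ins12 A X) = X ⊗ₜ[ℂ] (1 : B) := by
  induction X using TensorProduct.induction_on with
  | zero => simp
  | add u v hu hv => rw [map_add, map_add, hu, hv, TensorProduct.add_tmul]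
  | tmul x y => rw [ins12_tmul, i124_tmul]; rw [Algebra.TensorProduct.one_def]

lemma i124_ins13 (X : B) : i124 (ins13 A X) = E14 X := by
  induction X using TensorProduct.induction_on with
  | zero => simp
  | add u v hu hv => rw [map_add, map_add, hu, hv, map_add]
  | tmul x y => rw [ins13_tmul, i124_tmul]; simp

lemma i124_ins23 (X : B) : i124 (ins23 A X) = E24 X := by
  induction X using TensorProduct.induction_on with
  | zero => simp [ins23_apply, TensorProduct.tmul_zero]
  | add u v hu hv =>
    rw [ins23_apply, TensorProduct.tmul_add, map_add, ← ins23_apply, ← ins23_apply, hu, hv,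
      ← map_add]
  | tmul x y => rw [ins23_apply, i124_tmul]; simp

lemma i123_ins12 (X : B) : i123 (ins12 A X) = X ⊗ₜ[ℂ] (1 : B) := by
  induction X using TensorProduct.induction_on with
  | zero => simp
  | add u v hu hv => rw [map_add, map_add, hu, hv, TensorProduct.add_tmul]
  | tmul x y => rw [ins12_tmul, i123_tmul]; rw [Algebra.TensorProduct.one_def]

lemma i123_ins13 (X : B) : i123 (ins13 A X) = E13 X := by
  induction X using TensorProduct.induction_on with
  | zero => simp
  | add u v hu hv => rw [map_add, map_add, hu, hv, map_add]
  | tmul x y => rw [ins13_tmul, i123_tmul]; simp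

lemma i123_ins23 (X : B) : i123 (ins23 A X) = E23 X := by
  induction X using TensorProduct.induction_on with
  | zero => simp [ins23_apply, TensorProduct.tmul_zero]
  | add u v hu hv =>
    rw [ins23_apply, TensorProduct.tmul_add, map_add, ← ins23_apply, ← ins23_apply, hu, hv,
      ← map_add]
  | tmul x y => rw [ins23_apply, i123_tmul]; simp

lemma i134_ins13 (X : B) : i134 (ins13 A X) = E14 X := by
  induction X using TensorProduct.induction_on with
  | zero => simp
  | add u v hu hv => rw [map_add, map_add, hu, hv, map_add]
  | tmul x y => rw [ins13_tmul, i134_tmul]; simp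

lemma i134_ins12 (X : B) : i134 (ins12 A X) = E13 X := by
  induction X using TensorProduct.induction_on with
  | zero => simp
  | add u v hu hv => rw [map_add, map_add, hu, hv, map_add]
  | tmul x y => rw [ins12_tmul, i134_tmul]; simp

lemma i134_comulRight (X : B) :
    i134 (comulRight A X) = TensorProduct.map lmap (Coalgebra.comul (R := ℂ)) X := by
  induction X using TensorProduct.induction_on with
  | zero => simp
  | add u v hu hv => rw [map_add, map_add, hu, hv, map_add]
  | tmul x y => rw [comulRight_tmul, i134_tmul]; simp

lemma i234_ins13 (X : B) : i234 (ins13 A X) = E24 X := by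
  induction X using TensorProduct.induction_on with
  | zero => simp
  | add u v hu hv => rw [map_add, map_add, hu, hv, map_add]
  | tmul x y => rw [ins13_tmul, i234_tmul]; simp

lemma i234_ins12 (X : B) : i234 (ins12 A X) = E23 X := by
  induction X using TensorProduct.induction_on with
  | zero => simp
  | add u v hu hv => rw [map_add, map_add, hu, hv, map_add]
  | tmul x y => rw [ins12_tmul, i234_tmul]; simp

lemma i234_comulRight (X : B) :
    i234 (comulRight A X) = TensorProduct.map rmap (Coalgebra.comul (R := ℂ)) X := by
  induction X using TensorProduct.induction_on with
  | zero => simp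
  | add u v hu hv => rw [map_add, map_add, hu, hv, map_add]
  | tmul x y => rw [comulRight_tmul, i234_tmul]; simp

lemma sigma_ins13 (X : B) :
    sigmaMap (ins13 A X) = TensorProduct.map lmap (Coalgebra.comul (R := ℂ)) X := by
  induction X using TensorProduct.induction_on with
  | zero => simp
  | add u v hu hv => rw [map_add, map_add, hu, hv, map_add]
  | tmul x y => rw [ins13_tmul, sigmaMap_tmul]; simp

lemma sigma_ins23 (X : B) :
    sigmaMap (ins23 A X) = TensorProduct.map rmap (Coalgebra.comul (R := ℂ)) X := by
  induction X using TensorProduct.induction_on with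
  | zero => simp [ins23_apply, TensorProduct.tmul_zero]
  | add u v hu hv =>
    rw [ins23_apply, TensorProduct.tmul_add, map_add, ← ins23_apply, ← ins23_apply, hu, hv,
      ← map_add]
  | tmul x y => rw [ins23_apply, sigmaMap_tmul]; simp

lemma sigma_comulLeft (X : B) :
    sigmaMap (comulLeft A X)
      = TensorProduct.map (Coalgebra.comul (R := ℂ)) (Coalgebra.comul (R := ℂ)) X := by
  induction X using TensorProduct.induction_on with
  | zero => simp
  | add u v hu hv => rw [map_add, map_add, hu, hv, map_add]
  | tmul x y =>
    rw [comulLeft_tmul]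
    have r := Repr.arbitrary ℂ x
    rw [← r.eq, TensorProduct.sum_tmul, map_sum, map_sum]
    have h1 : ∀ i ∈ r.index,
        sigmaMap ((TensorProduct.assoc ℂ A A A) ((r.left i ⊗ₜ[ℂ] r.right i) ⊗ₜ[ℂ] y))
          = (r.left i ⊗ₜ[ℂ] r.right i) ⊗ₜ[ℂ] (Δ y) := by
      intro i _
      rw [TensorProduct.assoc_tmul, sigmaMap_tmul]
    rw [Finset.sum_congr rfl h1, ← TensorProduct.sum_tmul, r.eq, TensorProduct.map_tmul]

end Main5

section Main6


local notation "S" => HopfAlgebra.antipode (R := ℂ) (A := A)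
local notation "Δ" => Coalgebra.comul (R := ℂ) (A := A)
local notation "B" => (A ⊗[ℂ] A)

lemma sandwich_assoc (p q r s Z : B) : p * ((q * Z) * r) * s = ((p * q) * Z) * (r * s) := by
  simp only [mul_assoc]

lemma ML1 (Z : B) (X : B ⊗[ℂ] B) : Mmap ((Z ⊗ₜ[ℂ] (1 : B)) * X) = Z * Mmap X := by
  induction X using TensorProduct.induction_on with
  | zero => simp
  | add u v hu hv => rw [mul_add, map_add, hu, hv, map_add, mul_add]
  | tmul U V =>
    rw [Algebra.TensorProduct.tmul_mul_tmul, one_mul, Mmap_tmul, Mmap_tmul, mul_assoc]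

lemma MDelta (X : B) : Mmap (TensorProduct.map Δ Δ X) = Δ (phiOf X) := by
  induction X using TensorProduct.induction_on with
  | zero => simp
  | add u v hu hv => rw [map_add, map_add, hu, hv, phiOf_add, map_add]
  | tmul x y =>
    rw [TensorProduct.map_tmul, Mmap_tmul, Pm_comul, phiOf_tmul, Bialgebra.comul_mul]

lemma MRS (X : B) (W : B ⊗[ℂ] B) :
    Mmap ((TensorProduct.map rmap Δ X) * W) = SandMul (Mmap W) (TensorProduct.map rmap comulS X) := by
  induction X using TensorProduct.induction_on with
  | zero => simp
  | add u v hu hv => rw [map_add, add_mul, map_add, hu, hv, map_add, map_add]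
  | tmul x y =>
    induction W using TensorProduct.induction_on with
    | zero => simp
    | add u v hu hv =>
      rw [mul_add, map_add, hu, hv, map_add, SandMul_mid_add]
    | tmul U V =>
      rw [TensorProduct.map_tmul, Algebra.TensorProduct.tmul_mul_tmul, Mmap_tmul, Mmap_tmul,
        Pm_mul]
      rw [TensorProduct.map_tmul, SandMul_tmul]
      show (1 ⊗ₜ[ℂ] x * U) * (Pm V * Pm (Δ y)) = (1 ⊗ₜ[ℂ] x) * (U * Pm V) * (Pm (Δ y))
      simp only [comulS, LinearMap.comp_apply, mul_assoc]

lemma MLS (Y : B) (Z : B) :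
    Mmap ((TensorProduct.map lmap Δ Y) * (Z ⊗ₜ[ℂ] (1 : B)))
      = SandMul Z (TensorProduct.map lmap comulS Y) := by
  induction Y using TensorProduct.induction_on with
  | zero => simp
  | add u v hu hv => rw [map_add, add_mul, map_add, hu, hv, map_add, map_add]
  | tmul x y =>
    rw [TensorProduct.map_tmul, Algebra.TensorProduct.tmul_mul_tmul, mul_one, Mmap_tmul,
      TensorProduct.map_tmul, SandMul_tmul]
    rfl

lemma FACTL (X : B) :
    TensorProduct.map lmap comulS X
      = LinearMap.lTensor B Pm (LinearMap.rTensor B lmap (comulRight A X)) := by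
  induction X using TensorProduct.induction_on with
  | zero => simp
  | add u v hu hv => rw [map_add, hu, hv, map_add, map_add, map_add]
  | tmul x y => rw [TensorProduct.map_tmul, comulRight_tmul, LinearMap.rTensor_tmul,
      LinearMap.lTensor_tmul]; rfl

lemma FACTR (X : B) :
    TensorProduct.map rmap comulS X
      = LinearMap.lTensor B Pm (LinearMap.rTensor B rmap (comulRight A X)) := by
  induction X using TensorProduct.induction_on with
  | zero => simp
  | add u v hu hv => rw [map_add, hu, hv, map_add, map_add, map_add]
  | tmul x y => rw [TensorProduct.map_tmul, comulRight_tmul, LinearMap.rTensor_tmul,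
      LinearMap.lTensor_tmul]; rfl

lemma PhiSplit (Z U V : B) :
    SandMul Z (LinearMap.lTensor B Pm (LinearMap.rTensor B lmap (ins13 A U * ins12 A V)))
      = SandMul (SandMul Z (TensorProduct.map lmap (rmap ∘ₗ S) V))
          (TensorProduct.map lmap (lmap ∘ₗ S) U) := by
  induction U using TensorProduct.induction_on with
  | zero => simp
  | add u v hu hv => rw [map_add, add_mul, map_add, map_add, map_add, hu, hv, map_add, map_add]
  | tmul a b =>
    induction V using TensorProduct.induction_on with
    | zero => simp
    | add u v hu hv =>
      simp only [map_add, mul_add, SandMul_mid_add, hu, hv]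
    | tmul c d =>
      rw [ins13_tmul, ins12_tmul, Algebra.TensorProduct.tmul_mul_tmul,
        Algebra.TensorProduct.tmul_mul_tmul, one_mul, mul_one,
        LinearMap.rTensor_tmul, LinearMap.lTensor_tmul, Pm_tmul, SandMul_tmul,
        TensorProduct.map_tmul, TensorProduct.map_tmul, SandMul_tmul, SandMul_tmul]
      simp only [LinearMap.comp_apply]
      rw [sandwich_assoc]
      simp [Algebra.TensorProduct.tmul_mul_tmul]

lemma PsiSplit (Z U V : B) :
    SandMul Z (LinearMap.lTensor B Pm (LinearMap.rTensor B rmap (ins13 A U * ins12 A V)))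
      = SandMul (SandMul Z (TensorProduct.map rmap (rmap ∘ₗ S) V))
          (TensorProduct.map rmap (lmap ∘ₗ S) U) := by
  induction U using TensorProduct.induction_on with
  | zero => simp
  | add u v hu hv => rw [map_add, add_mul, map_add, map_add, map_add, hu, hv, map_add, map_add]
  | tmul a b =>
    induction V using TensorProduct.induction_on with
    | zero => simp
    | add u v hu hv =>
      simp only [map_add, mul_add, SandMul_mid_add, hu, hv]
    | tmul c d =>
      rw [ins13_tmul, ins12_tmul, Algebra.TensorProduct.tmul_mul_tmul,
        Algebra.TensorProduct.tmul_mul_tmul, one_mul, mul_one,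
        LinearMap.rTensor_tmul, LinearMap.lTensor_tmul, Pm_tmul, SandMul_tmul,
        TensorProduct.map_tmul, TensorProduct.map_tmul, SandMul_tmul, SandMul_tmul]
      simp only [LinearMap.comp_apply]
      rw [sandwich_assoc]
      simp [Algebra.TensorProduct.tmul_mul_tmul]

/-- `x ⊗ Q ↦ x ⊗ gMap Q` -/
abbrev J2 : A ⊗[ℂ] (A ⊗[ℂ] A) →ₗ[ℂ] B := LinearMap.lTensor A gMap

lemma J2_comulRight (X : B) : J2 (comulRight A X) = lmap (epsR X) := by
  induction X using TensorProduct.induction_on with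
  | zero => simp
  | add u v hu hv => rw [map_add, map_add, hu, hv, ← map_add, ← map_add]
  | tmul x y =>
    rw [comulRight_tmul, LinearMap.lTensor_tmul, gMap_comul, epsR_tmul, map_smul,
      TensorProduct.tmul_smul]
    rfl

lemma J2SPLIT (U V : B) :
    J2 (ins13 A U * ins12 A V) = SandMul V (TensorProduct.map lmap (rmap ∘ₗ S) U) := by
  induction U using TensorProduct.induction_on with
  | zero => simp
  | add u v hu hv => rw [map_add, add_mul, map_add, hu, hv, map_add, map_add]
  | tmul a b =>
    induction V using TensorProduct.induction_on with
    | zero => simp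
    | add u v hu hv => rw [map_add, mul_add, map_add, hu, hv, SandMul_mid_add]
    | tmul c d =>
      rw [ins13_tmul, ins12_tmul, Algebra.TensorProduct.tmul_mul_tmul,
        Algebra.TensorProduct.tmul_mul_tmul, one_mul, mul_one, LinearMap.lTensor_tmul,
        gMap_tmul, TensorProduct.map_tmul, SandMul_tmul]
      simp [Algebra.TensorProduct.tmul_mul_tmul]

lemma J2SPLIT2 (U V : B) :
    J2 (ins13 A U * ins23 A V)
      = ((1:A) ⊗ₜ[ℂ] phiOf V) * (TensorProduct.map LinearMap.id S U) := by
  induction U using TensorProduct.induction_on with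
  | zero => simp
  | add u v hu hv => rw [map_add, add_mul, map_add, hu, hv, map_add, mul_add]
  | tmul a b =>
    induction V using TensorProduct.induction_on with
    | zero => simp
    | add u v hu hv =>
      rw [ins23_apply, TensorProduct.tmul_add, mul_add, map_add, ← ins23_apply, ← ins23_apply,
        hu, hv, phiOf_add, TensorProduct.tmul_add, add_mul]
    | tmul c d =>
      rw [ins13_tmul, ins23_apply, Algebra.TensorProduct.tmul_mul_tmul,
        Algebra.TensorProduct.tmul_mul_tmul, mul_one, LinearMap.lTensor_tmul, gMap_tmul,
        antipode_mul_rev, phiOf_tmul, TensorProduct.map_tmul,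
        Algebra.TensorProduct.tmul_mul_tmul, one_mul]
      simp [Algebra.TensorProduct.tmul_mul_tmul, mul_assoc]

lemma J2TRI (Z U W : B) :
    J2 (ins12 A Z * (ins23 A U * comulRight A W)) = Z * ((epsR W) ⊗ₜ[ℂ] phiOf U) := by
  induction Z using TensorProduct.induction_on with
  | zero => simp
  | add u v hu hv => rw [map_add, add_mul, map_add, hu, hv, add_mul]
  | tmul c d =>
    induction W using TensorProduct.induction_on with
    | zero => simp
    | add u v hu hv =>
      rw [map_add, mul_add, mul_add, map_add, hu, hv, map_add, TensorProduct.add_tmul, mul_add]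
    | tmul x y =>
      rw [ins23_apply, comulRight_tmul, Algebra.TensorProduct.tmul_mul_tmul, one_mul,
        ins12_tmul, Algebra.TensorProduct.tmul_mul_tmul, LinearMap.lTensor_tmul,
        AUX2, aux_g_prod_comul, epsR_tmul, Algebra.TensorProduct.tmul_mul_tmul]
      simp [mul_smul_comm, TensorProduct.smul_tmul', TensorProduct.tmul_smul]

lemma VALA (w : A) (X : B) :
    SandMul (w ⊗ₜ[ℂ] (1:A)) (TensorProduct.map rmap (rmap ∘ₗ S) X) = w ⊗ₜ[ℂ] phiOf X := by
  induction X using TensorProduct.induction_on with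
  | zero => simp
  | add u v hu hv => rw [map_add, map_add, hu, hv, phiOf_add, TensorProduct.tmul_add]
  | tmul c d =>
    simp [Algebra.TensorProduct.tmul_mul_tmul]

lemma VALB (w₁ w₂ : A) (X : B) :
    SandMul (w₁ ⊗ₜ[ℂ] w₂) (TensorProduct.map rmap (lmap ∘ₗ S) X)
      = (TensorProduct.comm ℂ A A) (((1:A) ⊗ₜ[ℂ] w₁) * (TensorProduct.map LinearMap.id S X))
          * ((1:A) ⊗ₜ[ℂ] w₂) := by
  induction X using TensorProduct.induction_on with
  | zero => simp
  | add u v hu hv => rw [map_add, map_add, hu, hv, map_add, mul_add, map_add, add_mul]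
  | tmul c d =>
    simp [Algebra.TensorProduct.tmul_mul_tmul]

lemma comm_mul (X Y : B) :
    (TensorProduct.comm ℂ A A) (X * Y)
      = (TensorProduct.comm ℂ A A) X * (TensorProduct.comm ℂ A A) Y := by
  induction X using TensorProduct.induction_on with
  | zero => simp
  | add u v hu hv => rw [add_mul, map_add, hu, hv, map_add, add_mul]
  | tmul a b =>
    induction Y using TensorProduct.induction_on with
    | zero => simp
    | add u v hu hv => rw [mul_add, map_add, hu, hv, map_add, mul_add]
    | tmul c d =>
      rw [Algebra.TensorProduct.tmul_mul_tmul, TensorProduct.comm_tmul, TensorProduct.comm_tmul,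
        TensorProduct.comm_tmul, Algebra.TensorProduct.tmul_mul_tmul]

lemma SAND1 (X : B) :
    SandMul 1 (TensorProduct.map lmap (lmap ∘ₗ S) X) = (phiOf X) ⊗ₜ[ℂ] (1:A) := by
  induction X using TensorProduct.induction_on with
  | zero => simp
  | add u v hu hv => rw [map_add, map_add, hu, hv, phiOf_add, TensorProduct.add_tmul]
  | tmul a b =>
    simp [Algebra.TensorProduct.tmul_mul_tmul]

lemma comm_E13_E24 (X Y : B) : E13 X * E24 Y = E24 Y * E13 X := by
  induction X using TensorProduct.induction_on with
  | zero => simp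
  | add u v hu hv => rw [map_add, add_mul, mul_add, hu, hv]
  | tmul a b =>
    induction Y using TensorProduct.induction_on with
    | zero => simp
    | add u v hu hv => rw [map_add, mul_add, add_mul, hu, hv]
    | tmul c d =>
      simp [Algebra.TensorProduct.tmul_mul_tmul]

lemma comm_E14_E23 (X Y : B) : E14 X * E23 Y = E23 Y * E14 X := by
  induction X using TensorProduct.induction_on with
  | zero => simp
  | add u v hu hv => rw [map_add, add_mul, mul_add, hu, hv]
  | tmul a b =>
    induction Y using TensorProduct.induction_on with
    | zero => simp
    | add u v hu hv => rw [map_add, mul_add, add_mul, hu, hv]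
    | tmul c d =>
      simp [Algebra.TensorProduct.tmul_mul_tmul]

end Main6

section Main7


local notation "S" => HopfAlgebra.antipode (R := ℂ) (A := A)
local notation "Δ" => Coalgebra.comul (R := ℂ) (A := A)
local notation "B" => (A ⊗[ℂ] A)

lemma chain_monoid {G : Type} [Semigroup G] (f a b c d : G)
    (hbc : b * c = c * b) (had : a * d = d * a)
    (y1 : f * (a * c) = c * (a * f)) (y2 : f * (b * d) = d * (b * f)) :
    f * ((a * b) * (c * d)) = (c * d) * ((a * b) * f) := by
  calc f * ((a * b) * (c * d))
      = f * (a * ((b * c) * d)) := by simp only [mul_assoc]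
    _ = f * (a * ((c * b) * d)) := by rw [hbc]
    _ = (f * (a * c)) * (b * d) := by simp only [mul_assoc]
    _ = (c * (a * f)) * (b * d) := by rw [y1]
    _ = c * (a * (f * (b * d))) := by simp only [mul_assoc]
    _ = c * (a * (d * (b * f))) := by rw [y2]
    _ = c * ((a * d) * (b * f)) := by simp only [mul_assoc]
    _ = c * ((d * a) * (b * f)) := by rw [had]
    _ = (c * d) * ((a * b) * f) := by simp only [mul_assoc]

variable {Fm Finv : A ⊗[ℂ] A}

lemma YBE124 (hYBE : ins12 A Fm * (ins13 A Fm * ins23 A Fm)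
      = ins23 A Fm * (ins13 A Fm * ins12 A Fm)) :
    (Fm ⊗ₜ[ℂ] (1:B)) * (E14 Fm * E24 Fm) = E24 Fm * (E14 Fm * (Fm ⊗ₜ[ℂ] (1:B))) := by
  have h := congrArg i124 hYBE
  rw [map_mul, map_mul, map_mul, map_mul, i124_ins12, i124_ins13, i124_ins23] at h
  exact h

lemma YBE123 (hYBE : ins12 A Fm * (ins13 A Fm * ins23 A Fm)
      = ins23 A Fm * (ins13 A Fm * ins12 A Fm)) :
    (Fm ⊗ₜ[ℂ] (1:B)) * (E13 Fm * E23 Fm) = E23 Fm * (E13 Fm * (Fm ⊗ₜ[ℂ] (1:B))) := by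
  have h := congrArg i123 hYBE
  rw [map_mul, map_mul, map_mul, map_mul, i123_ins12, i123_ins13, i123_ins23] at h
  exact h

lemma HexA (hFhex2 : comulRight A Fm = ins13 A Fm * ins12 A Fm) :
    TensorProduct.map lmap Δ Fm = E14 Fm * E13 Fm := by
  have h := congrArg i134 hFhex2
  rw [map_mul, i134_comulRight, i134_ins13, i134_ins12] at h
  exact h

lemma HexB (hFhex2 : comulRight A Fm = ins13 A Fm * ins12 A Fm) :
    TensorProduct.map rmap Δ Fm = E24 Fm * E23 Fm := by
  have h := congrArg i234 hFhex2
  rw [map_mul, i234_comulRight, i234_ins13, i234_ins12] at h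
  exact h

lemma HexC (hFhex1 : comulLeft A Fm = ins13 A Fm * ins23 A Fm) :
    TensorProduct.map Δ Δ Fm = TensorProduct.map lmap Δ Fm * TensorProduct.map rmap Δ Fm := by
  have h := congrArg sigmaMap hFhex1
  rw [map_mul, sigma_comulLeft, sigma_ins13, sigma_ins23] at h
  exact h

lemma CHAIN (hYBE : ins12 A Fm * (ins13 A Fm * ins23 A Fm)
      = ins23 A Fm * (ins13 A Fm * ins12 A Fm))
    (hFhex1 : comulLeft A Fm = ins13 A Fm * ins23 A Fm)
    (hFhex2 : comulRight A Fm = ins13 A Fm * ins12 A Fm) :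
    (Fm ⊗ₜ[ℂ] (1:B)) * TensorProduct.map Δ Δ Fm
      = TensorProduct.map rmap Δ Fm * (TensorProduct.map lmap Δ Fm * (Fm ⊗ₜ[ℂ] (1:B))) := by
  rw [HexC hFhex1, HexA hFhex2, HexB hFhex2]
  exact chain_monoid _ _ _ _ _ (comm_E13_E24 Fm Fm) (comm_E14_E23 Fm Fm)
    (YBE124 hYBE) (YBE123 hYBE)

lemma Wprime (hF2 : Finv * Fm = 1)
    (hFhex2 : comulRight A Fm = ins13 A Fm * ins12 A Fm) :
    SandMul Fm (TensorProduct.map lmap (rmap ∘ₗ S) Fm) = 1 := by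
  rw [← J2SPLIT, ← hFhex2, J2_comulRight, epsR_F hF2 hFhex2, lmap_apply,
    ← Algebra.TensorProduct.one_def]

lemma Need1 (hF2 : Finv * Fm = 1)
    (hFhex2 : comulRight A Fm = ins13 A Fm * ins12 A Fm) :
    SandMul Fm (TensorProduct.map lmap comulS Fm) = phiOf Fm ⊗ₜ[ℂ] (1:A) := by
  rw [FACTL, hFhex2, PhiSplit, Wprime hF2 hFhex2, SAND1]

lemma DAGGER (hF2 : Finv * Fm = 1)
    (hFcoc : ins12 A Fm * comulLeft A Fm = ins23 A Fm * comulRight A Fm)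
    (hFhex1 : comulLeft A Fm = ins13 A Fm * ins23 A Fm)
    (hFhex2 : comulRight A Fm = ins13 A Fm * ins12 A Fm) :
    ((1:A) ⊗ₜ[ℂ] phiOf Fm) * (TensorProduct.map LinearMap.id S Fm)
      = Finv * ((1:A) ⊗ₜ[ℂ] phiOf Fm) := by
  have h1 : J2 (comulLeft A Fm)
      = ((1:A) ⊗ₜ[ℂ] phiOf Fm) * (TensorProduct.map LinearMap.id S Fm) := by
    rw [hFhex1, J2SPLIT2]
  have h2 : J2 (comulLeft A Fm) = Finv * ((epsR Fm) ⊗ₜ[ℂ] phiOf Fm) := by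
    rw [← cocycle_re2 hF2 hFcoc, J2TRI]
  rw [epsR_F hF2 hFhex2] at h2
  rw [← h1, h2]

lemma Need2 (hF2 : Finv * Fm = 1)
    (hFcoc : ins12 A Fm * comulLeft A Fm = ins23 A Fm * comulRight A Fm)
    (hFhex1 : comulLeft A Fm = ins13 A Fm * ins23 A Fm)
    (hFhex2 : comulRight A Fm = ins13 A Fm * ins12 A Fm) :
    SandMul (phiOf Fm ⊗ₜ[ℂ] (1:A)) (TensorProduct.map rmap comulS Fm)
      = (TensorProduct.comm ℂ A A) Finv * (phiOf Fm ⊗ₜ[ℂ] phiOf Fm) := by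
  rw [FACTR, hFhex2, PsiSplit, VALA, VALB, DAGGER hF2 hFcoc hFhex1 hFhex2, comm_mul,
    TensorProduct.comm_tmul, mul_assoc, Algebra.TensorProduct.tmul_mul_tmul, mul_one, one_mul]

lemma comul_phi (hF1 : Fm * Finv = 1) (hF2 : Finv * Fm = 1)
    (hFcoc : ins12 A Fm * comulLeft A Fm = ins23 A Fm * comulRight A Fm)
    (hFhex1 : comulLeft A Fm = ins13 A Fm * ins23 A Fm)
    (hFhex2 : comulRight A Fm = ins13 A Fm * ins12 A Fm) :
    Δ (phiOf Fm)
      = Finv * ((TensorProduct.comm ℂ A A) Finv) * (phiOf Fm ⊗ₜ[ℂ] phiOf Fm) := by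
  have hY : ins12 A Fm * (ins13 A Fm * ins23 A Fm)
      = ins23 A Fm * (ins13 A Fm * ins12 A Fm) := by
    have h := hFcoc
    rw [hFhex1, hFhex2] at h
    exact h
  have key : Fm * Δ (phiOf Fm)
      = (TensorProduct.comm ℂ A A) Finv * (phiOf Fm ⊗ₜ[ℂ] phiOf Fm) := by
    rw [← MDelta, ← ML1, CHAIN hY hFhex1 hFhex2, MRS, MLS, Need1 hF2 hFhex2,
      Need2 hF2 hFcoc hFhex1 hFhex2]
  calc Δ (phiOf Fm) = (Finv * Fm) * Δ (phiOf Fm) := by rw [hF2, one_mul]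
    _ = Finv * (Fm * Δ (phiOf Fm)) := mul_assoc _ _ _
    _ = Finv * ((TensorProduct.comm ℂ A A) Finv * (phiOf Fm ⊗ₜ[ℂ] phiOf Fm)) := by rw [key]
    _ = Finv * ((TensorProduct.comm ℂ A A) Finv) * (phiOf Fm ⊗ₜ[ℂ] phiOf Fm) :=
        (mul_assoc _ _ _).symm

end Main7


variable (A)

/-- For an invertible twisting element `F = α ⊗ β` of a quasitriangular Hopf
algebra satisfying the cocycle and hexagon conditions, the element
`φ = α S(β)` is invertible with `φ⁻¹ = S(γ) δ` (where `F⁻¹ = γ ⊗ δ`), and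
`Δ(φ) = F₁₂⁻¹ F₂₁⁻¹ (φ ⊗ φ)`. -/
theorem twisting_element_phi_coproduct
    (Rm Rinv : A ⊗[ℂ] A)
    (hR1 : Rm * Rinv = 1) (hR2 : Rinv * Rm = 1)
    (hRqt : ∀ x : A, (TensorProduct.comm ℂ A A) (Coalgebra.comul x) * Rm =
      Rm * Coalgebra.comul x)
    (hRhex1 : comulLeft A Rm = ins13 A Rm * ins23 A Rm)
    (hRhex2 : comulRight A Rm = ins13 A Rm * ins12 A Rm)
    (Fm Finv : A ⊗[ℂ] A)
    (hF1 : Fm * Finv = 1) (hF2 : Finv * Fm = 1)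
    (hFcoc : ins12 A Fm * comulLeft A Fm = ins23 A Fm * comulRight A Fm)
    (hFhex1 : comulLeft A Fm = ins13 A Fm * ins23 A Fm)
    (hFhex2 : comulRight A Fm = ins13 A Fm * ins12 A Fm) :
    LinearMap.mul' ℂ A (TensorProduct.map LinearMap.id (HopfAlgebra.antipode (R := ℂ)) Fm) *
        LinearMap.mul' ℂ A (TensorProduct.map (HopfAlgebra.antipode (R := ℂ)) LinearMap.id Finv)
        = 1 ∧
    LinearMap.mul' ℂ A (TensorProduct.map (HopfAlgebra.antipode (R := ℂ)) LinearMap.id Finv) *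
        LinearMap.mul' ℂ A (TensorProduct.map LinearMap.id (HopfAlgebra.antipode (R := ℂ)) Fm)
        = 1 ∧
    Coalgebra.comul (R := ℂ)
        (LinearMap.mul' ℂ A (TensorProduct.map LinearMap.id (HopfAlgebra.antipode (R := ℂ)) Fm))
      = Finv * (TensorProduct.comm ℂ A A Finv) *
        ((LinearMap.mul' ℂ A (TensorProduct.map LinearMap.id (HopfAlgebra.antipode (R := ℂ)) Fm)) ⊗ₜ[ℂ]
         (LinearMap.mul' ℂ A (TensorProduct.map LinearMap.id (HopfAlgebra.antipode (R := ℂ)) Fm))) := by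
  refine ⟨?_, ?_, ?_⟩
  · exact inv_phi_psi hF1 hF2 hFcoc hFhex1 hFhex2
  · exact inv_psi_phi hF1 hF2 hFcoc hFhex1 hFhex2
  · exact comul_phi hF1 hF2 hFcoc hFhex1 hFhex2

end
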